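/- Let B = ℂ[X,Y] and D the derivation with D(X) = 2πi·X, D(Y) = 0. Then exp(D) is the identity automorphism of B, but D ≠ 0; in particular the isotropy group of exp(D) is all of Aut(B), while the isotropy group of D consists only of the automorphisms (X,Y) ↦ (cX, aY+b) with c, a ∈ ℂ*, b ∈ ℂ. -/

import Mathlib

open MvPolynomial Complex

lemma my_coeff_pderiv (i : Fin 2) (g : MvPolynomial (Fin 2) ℂ) (t : Fin 2 →₀ ℕ) :
    coeff t (pderiv i g) = ((t i : ℂ) + 1) * coeff (t + Finsupp.single i 1) g := by
  induction g using MvPolynomial.induction_on' with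
  | add p q hp hq => simp [hp, hq, mul_add]
  | monomial s a =>
    rw [pderiv_monomial]
    simp only [coeff_monomial]
    by_cases h : s = t + Finsupp.single i 1
    · subst h
      simp [add_tsub_cancel_right, Finsupp.add_apply, Finsupp.single_apply]
      ring
    · rw [if_neg h]
      split_ifs with h'
      · rcases Nat.eq_zero_or_pos (s i) with h0 | h0
        · simp [h0]
        · exfalso; apply h
          ext j
          have hj : t j = s j - (Finsupp.single i 1) j := by
            rw [← h', Finsupp.tsub_apply]
          simp only [Finsupp.add_apply, Finsupp.single_apply] at hj ⊢
          split_ifs at hj ⊢ with hij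
          · subst hij; omega
          · omega
      · simp

lemma my_mem_range (g : MvPolynomial (Fin 2) ℂ) (hg : pderiv 0 g = 0) :
    ∃ p : Polynomial ℂ, Polynomial.aeval (X 1 : MvPolynomial (Fin 2) ℂ) p = g := by
  have hv : (0 : Fin 2) ∉ g.vars := by
    intro h
    obtain ⟨d, hd, hdi⟩ := (mem_vars _).1 h
    have hd0 : d 0 ≠ 0 := Finsupp.mem_support_iff.1 hdi
    have key := my_coeff_pderiv 0 g (d - Finsupp.single 0 1)
    have hds : (d - Finsupp.single 0 1) + Finsupp.single 0 1 = d := by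
      ext j
      simp only [Finsupp.add_apply, Finsupp.tsub_apply, Finsupp.single_apply]
      split_ifs with hij
      · subst hij; omega
      · omega
    rw [hg, hds, coeff_zero] at key
    have h2 : coeff d g = 0 := by
      rcases mul_eq_zero.1 key.symm with h | h
      · exact absurd h (Nat.cast_add_one_ne_zero _)
      · exact h
    exact Finsupp.mem_support_iff.1 hd h2
  have hsup : g ∈ supported ℂ ({1} : Set (Fin 2)) := by
    rw [mem_supported]
    intro x hx
    fin_cases x
    · exact absurd hx hv
    · exact Set.mem_singleton _
  have him : (MvPolynomial.X '' ({1} : Set (Fin 2))) = {(X 1 : MvPolynomial (Fin 2) ℂ)} :=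
    Set.image_singleton
  have hsup' : g ∈ Algebra.adjoin ℂ ({X 1} : Set (MvPolynomial (Fin 2) ℂ)) := him ▸ hsup
  rw [Algebra.adjoin_singleton_eq_range_aeval ℂ (X 1 : MvPolynomial (Fin 2) ℂ)] at hsup'
  exact hsup'

lemma my_aeval_inj :
    Function.Injective (Polynomial.aeval (R := ℂ) (X 1 : MvPolynomial (Fin 2) ℂ)) := by
  intro p q h
  have := congrArg (MvPolynomial.aeval (fun i : Fin 2 => if i = 1 then (Polynomial.X : Polynomial ℂ) else 0)) h
  rwa [← Polynomial.aeval_algHom_apply, ← Polynomial.aeval_algHom_apply, aeval_X, if_pos rfl,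
    Polynomial.aeval_X_left_apply, Polynomial.aeval_X_left_apply] at this

set_option maxHeartbeats 1000000 in
/-- For `D = 2πi X ∂/∂X` on `ℂ[X,Y]`: `exp(D)` (defined on monomials by
`X^m Y^n ↦ e^{2πim} X^m Y^n`) is the identity while `D ≠ 0`; the isotropy group
of `exp(D)` is all of `Aut(ℂ[X,Y])` while the isotropy group of `D` consists
exactly of the automorphisms `(X,Y) ↦ (cX, aY + b)`. -/
theorem semisimple_exp_identity_example
    (D : Derivation ℂ (MvPolynomial (Fin 2) ℂ) (MvPolynomial (Fin 2) ℂ))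
    (hDX : D (X 0) = C (2 * (Real.pi : ℂ) * I) * X 0)
    (hDY : D (X 1) = 0)
    (E : MvPolynomial (Fin 2) ℂ ≃ₐ[ℂ] MvPolynomial (Fin 2) ℂ)
    (hE : ∀ m n : ℕ, E (X 0 ^ m * X 1 ^ n)
      = Complex.exp (2 * (Real.pi : ℂ) * I * m) • (X 0 ^ m * X 1 ^ n)) :
    D ≠ 0 ∧
    E = AlgEquiv.refl ∧
    (∀ ρ : MvPolynomial (Fin 2) ℂ ≃ₐ[ℂ] MvPolynomial (Fin 2) ℂ,
      ρ.trans E = E.trans ρ) ∧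
    (∀ ρ : MvPolynomial (Fin 2) ℂ ≃ₐ[ℂ] MvPolynomial (Fin 2) ℂ,
      (∀ g : MvPolynomial (Fin 2) ℂ, ρ (D g) = D (ρ g)) ↔
        ∃ c a b : ℂ, c ≠ 0 ∧ a ≠ 0 ∧
          ρ (X 0) = C c * X 0 ∧ ρ (X 1) = C a * X 1 + C b) := by
  have hk : (2 * (Real.pi : ℂ) * I) ≠ 0 :=
    mul_ne_zero (mul_ne_zero two_ne_zero (by exact_mod_cast Real.pi_ne_zero)) I_ne_zero
  have hCk : (C (2 * (Real.pi : ℂ) * I) : MvPolynomial (Fin 2) ℂ) ≠ 0 := by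
    simpa using hk
  have hX0ne : (X 0 : MvPolynomial (Fin 2) ℂ) ≠ 0 := X_ne_zero 0
  -- D is `2πi X₀ ∂/∂X₀`
  have hD0 : D = ((C (2 * (Real.pi : ℂ) * I) * X 0 : MvPolynomial (Fin 2) ℂ) •
      pderiv (R := ℂ) 0) := by
    apply derivation_ext
    intro i
    fin_cases i
    · simp [hDX, smul_eq_mul]
    · simp [hDY, pderiv_X_of_ne (show (1 : Fin 2) ≠ 0 by decide)]
  have hD : ∀ g, D g = C (2 * (Real.pi : ℂ) * I) * (X 0 * pderiv 0 g) := by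
    intro g; rw [hD0]; simp [smul_eq_mul]; ring
  refine ⟨?_, ?_, ?_, ?_⟩
  · intro h
    rw [h] at hDX
    simp only [Derivation.coe_zero, Pi.zero_apply] at hDX
    exact mul_ne_zero hCk hX0ne hDX.symm
  · have hX0 : E (X 0) = X 0 := by
      simpa [Complex.exp_two_pi_mul_I] using hE 1 0
    have hX1 : E (X 1) = X 1 := by
      simpa using hE 0 1
    have h2 : (E : MvPolynomial (Fin 2) ℂ →ₐ[ℂ] MvPolynomial (Fin 2) ℂ)
        = AlgHom.id ℂ _ := by
      apply MvPolynomial.algHom_ext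
      intro i
      fin_cases i
      · simpa using hX0
      · simpa using hX1
    exact AlgEquiv.ext fun x => by simpa using DFunLike.congr_fun h2 x
  · intro ρ
    have hX0 : E (X 0) = X 0 := by
      simpa [Complex.exp_two_pi_mul_I] using hE 1 0
    have hX1 : E (X 1) = X 1 := by
      simpa using hE 0 1
    have h2 : (E : MvPolynomial (Fin 2) ℂ →ₐ[ℂ] MvPolynomial (Fin 2) ℂ)
        = AlgHom.id ℂ _ := by
      apply MvPolynomial.algHom_ext
      intro i
      fin_cases i
      · simpa using hX0
      · simpa using hX1
    have hErefl : E = AlgEquiv.refl := AlgEquiv.ext fun x => by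
      simpa using DFunLike.congr_fun h2 x
    rw [hErefl]
    ext x
    simp
  · intro ρ
    have hρC : ∀ (τ : MvPolynomial (Fin 2) ℂ ≃ₐ[ℂ] MvPolynomial (Fin 2) ℂ) (r : ℂ),
        τ (C r) = C r := by
      intro τ r
      simpa [MvPolynomial.algebraMap_eq] using τ.commutes r
    constructor
    · intro hcomm
      have hcomm' : ∀ g, ρ.symm (D g) = D (ρ.symm g) := by
        intro g
        have h := hcomm (ρ.symm g)
        rw [AlgEquiv.apply_symm_apply] at h
        rw [← h, AlgEquiv.symm_apply_apply]
      set P := ρ (X 0) with hPdef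
      set Q := ρ (X 1) with hQdef
      set P' := ρ.symm (X 0) with hP'def
      set Q' := ρ.symm (X 1) with hQ'def
      -- structure of images of X 0
      have h1 : ∀ (τ : MvPolynomial (Fin 2) ℂ ≃ₐ[ℂ] MvPolynomial (Fin 2) ℂ),
          (∀ g, τ (D g) = D (τ g)) → X 0 * pderiv 0 (τ (X 0)) = τ (X 0) := by
        intro τ hτ
        have h := hτ (X 0)
        rw [hDX, map_mul, hρC τ, hD] at h
        exact (mul_left_cancel₀ hCk h).symm
      have h2 : ∀ (τ : MvPolynomial (Fin 2) ℂ ≃ₐ[ℂ] MvPolynomial (Fin 2) ℂ),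
          (∀ g, τ (D g) = D (τ g)) → pderiv 0 (τ (X 1)) = 0 := by
        intro τ hτ
        have h := hτ (X 1)
        rw [hDY, map_zero, hD] at h
        rcases mul_eq_zero.1 h.symm with h' | h'
        · exact absurd h' hCk
        · rcases mul_eq_zero.1 h' with h'' | h''
          · exact absurd h'' hX0ne
          · exact h''
      have hFzero : ∀ (τ : MvPolynomial (Fin 2) ℂ ≃ₐ[ℂ] MvPolynomial (Fin 2) ℂ),
          (∀ g, τ (D g) = D (τ g)) → pderiv 0 (pderiv 0 (τ (X 0))) = 0 := by
        intro τ hτ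
        have h := congrArg (pderiv (R := ℂ) 0) (h1 τ hτ)
        rw [pderiv_mul, pderiv_X_self, one_mul] at h
        have h' : X 0 * pderiv 0 (pderiv 0 (τ (X 0))) = 0 := by
          linear_combination h
        rcases mul_eq_zero.1 h' with h'' | h''
        · exact absurd h'' hX0ne
        · exact h''
      obtain ⟨q, hq⟩ := my_mem_range Q (h2 ρ hcomm)
      obtain ⟨q', hq'⟩ := my_mem_range Q' (h2 ρ.symm hcomm')
      obtain ⟨f, hf⟩ := my_mem_range (pderiv 0 P) (hFzero ρ hcomm)
      obtain ⟨f', hf'⟩ := my_mem_range (pderiv 0 P') (hFzero ρ.symm hcomm')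
      -- ρ acts on ℂ[X 1] by composition with q
      have hρφ : ∀ p : Polynomial ℂ,
          ρ (Polynomial.aeval (X 1 : MvPolynomial (Fin 2) ℂ) p)
            = Polynomial.aeval (X 1 : MvPolynomial (Fin 2) ℂ) (p.comp q) := by
        intro p
        rw [Polynomial.comp_eq_aeval,
          ← Polynomial.aeval_algHom_apply
            (Polynomial.aeval (X 1 : MvPolynomial (Fin 2) ℂ)) q p, hq,
          Polynomial.aeval_algHom_apply ρ (X 1) p]
      -- `q'.comp q = X`
      have hcompX : q'.comp q = Polynomial.X := by
        apply my_aeval_inj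
        rw [← hρφ q', hq', Polynomial.aeval_X]
        exact AlgEquiv.apply_symm_apply ρ (X 1)
      have hdeg : q.natDegree = 1 := by
        have h := congrArg Polynomial.natDegree hcompX
        rw [Polynomial.natDegree_comp, Polynomial.natDegree_X] at h
        have hd : q.natDegree ∣ 1 := Dvd.intro_left _ h
        exact Nat.dvd_one.mp hd
      obtain ⟨a, ha0, b, hqab⟩ := Polynomial.natDegree_eq_one.mp hdeg
      -- the unit
      have hunit : pderiv 0 P * ρ (pderiv 0 P') = 1 := by
        apply mul_left_cancel₀ hX0ne
        calc X 0 * (pderiv 0 P * ρ (pderiv 0 P'))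
            = (X 0 * pderiv 0 P) * ρ (pderiv 0 P') := by ring
          _ = P * ρ (pderiv 0 P') := by rw [h1 ρ hcomm]
          _ = ρ (X 0) * ρ (pderiv 0 P') := rfl
          _ = ρ (X 0 * pderiv 0 P') := (map_mul ρ _ _).symm
          _ = ρ P' := by rw [h1 ρ.symm hcomm']
          _ = X 0 := AlgEquiv.apply_symm_apply ρ (X 0)
          _ = X 0 * 1 := (mul_one _).symm
      have hfunit : f * (f'.comp q) = 1 := by
        apply my_aeval_inj
        rw [map_mul, map_one, hf, ← hρφ f', hf']
        exact hunit
      obtain ⟨cc, hcu, hcf⟩ := Polynomial.isUnit_iff.mp (IsUnit.of_mul_eq_one _ hfunit)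
      refine ⟨cc, a, b, hcu.ne_zero, ha0, ?_, ?_⟩
      · rw [hPdef, ← h1 ρ hcomm, ← hf, ← hcf]
        simp [mul_comm]
      · have hq2 := hq
        rw [← hqab, hQdef] at hq2
        rw [hQdef, ← hq2]
        simp [MvPolynomial.algebraMap_eq]
    · rintro ⟨c, a, b, hc0, ha0, hc, ha⟩ g
      have chain : ∀ g, pderiv 0 (ρ g) = C c * ρ (pderiv 0 g) := by
        intro g
        induction g using MvPolynomial.induction_on with
        | C r => simp [hρC ρ]
        | add p q hp hq => simp [map_add, hp, hq, mul_add]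
        | mul_X p i hp =>
          have hi : i = 0 ∨ i = 1 := by fin_cases i <;> [exact Or.inl rfl; exact Or.inr rfl]
          have hder1 : pderiv 0 (C a * X 1 + C b : MvPolynomial (Fin 2) ℂ) = 0 := by
            rw [map_add, pderiv_C, pderiv_C_mul,
              pderiv_X_of_ne (show (1 : Fin 2) ≠ 0 by decide)]
            simp
          rcases hi with rfl | rfl
          · simp only [map_mul, pderiv_mul, map_add, hc, hp,
              pderiv_X_self, map_one, pderiv_C_mul, mul_one, pderiv_C]
            ring
          · simp only [map_mul, pderiv_mul, map_add, ha, hp, hder1,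
              pderiv_X_of_ne (show (1 : Fin 2) ≠ 0 by decide), map_zero, mul_zero,
              zero_mul, add_zero]
            ring
      rw [hD g, hD (ρ g), chain g, map_mul ρ, map_mul ρ, hρC ρ, hc]
      ring
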